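/- Let B(v) be a disc of radius r and 𝔹(R) a disc of radius R with centers at distance d_c ≥ r, whose boundary circles intersect. If Area(B(v) ∩ 𝔹(R)) ≤ (π/3)·r², then d_c > R and there is an absolute constant C₂ > 0 such that R + r − d_c ≤ C₂·r; moreover the half-angle γ = arccos((d_c² + r² − R²)/(2 r d_c)) of the circular sector of B(v) containing the lune satisfies γ ≤ γ_max for some absolute constant γ_max < π/2. -/

import Mathlib

open Real Metric MeasureTheory

set_option maxHeartbeats 3000000

open Set

lemma strip_volume (h a b k l : ℝ) (hh : 0 < h) (hk : 0 ≤ k) (hl : 0 ≤ l)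
    (hkl : b - a = (k + l) * h ^ 2) :
    volume {u : ℂ | |u.im| < h ∧ a + k * u.im ^ 2 < u.re ∧ u.re < b - l * u.im ^ 2}
      = ENNReal.ofReal (4 / 3 * (b - a) * h) := by
  set f : ℝ → ℝ := fun y => a + k * y ^ 2 with hf
  set g : ℝ → ℝ := fun y => b - l * y ^ 2 with hg
  have hfc : Continuous f := by fun_prop
  have hgc : Continuous g := by fun_prop
  have hmp : MeasurePreserving (fun z : ℂ => (z.im, z.re)) volume
      ((volume : Measure ℝ).prod (volume : Measure ℝ)) := by
    have h2 : MeasurePreserving (Prod.swap : ℝ × ℝ → ℝ × ℝ)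
        ((volume : Measure ℝ).prod volume) ((volume : Measure ℝ).prod volume) :=
      Measure.measurePreserving_swap
    have h1 := Complex.volume_preserving_equiv_real_prod
    have : MeasurePreserving (fun z : ℂ => Prod.swap (Complex.measurableEquivRealProd z))
        volume ((volume : Measure ℝ).prod volume) := by
      refine h2.comp ?_
      rwa [Measure.volume_eq_prod] at h1
    exact this
  have hseteq : {u : ℂ | |u.im| < h ∧ a + k * u.im ^ 2 < u.re ∧ u.re < b - l * u.im ^ 2}
      = (fun z : ℂ => (z.im, z.re)) ⁻¹' (regionBetween f g (Ioo (-h) h)) := by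
    ext u
    simp only [mem_setOf_eq, mem_preimage, regionBetween, mem_Ioo, abs_lt, hf, hg]
  have hmeas : MeasurableSet (regionBetween f g (Ioo (-h) h)) :=
    measurableSet_regionBetween hfc.measurable hgc.measurable measurableSet_Ioo
  rw [hseteq, hmp.measure_preimage hmeas.nullMeasurableSet]
  have hfg : ∀ y ∈ Ioo (-h) h, f y ≤ g y := by
    intro y hy
    simp only [mem_Ioo] at hy
    have : y ^ 2 ≤ h ^ 2 := by nlinarith [hy.1, hy.2]
    simp only [hf, hg]
    nlinarith [mul_nonneg hk (sub_nonneg.2 this), mul_nonneg hl (sub_nonneg.2 this)]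
  rw [volume_regionBetween_eq_integral (hfc.integrableOn_Icc.mono_set Ioo_subset_Icc_self) (hgc.integrableOn_Icc.mono_set Ioo_subset_Icc_self)
    measurableSet_Ioo hfg]
  congr 1
  have : ∫ y in Ioo (-h) h, (g - f) y = ∫ y in Ioo (-h) h, (b - a) - (k + l) * y ^ 2 := by
    apply setIntegral_congr_fun measurableSet_Ioo
    intro y _
    simp [hf, hg]; ring
  rw [this, ← integral_Ioc_eq_integral_Ioo, ← intervalIntegral.integral_of_le (by linarith)]
  rw [intervalIntegral.integral_sub intervalIntegrable_const (by apply IntervalIntegrable.const_mul; exact intervalIntegral.intervalIntegrable_pow 2)]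
  rw [intervalIntegral.integral_const, intervalIntegral.integral_const_mul, integral_pow]
  simp only [smul_eq_mul]
  push_cast
  linear_combination (2 * h / 3) * hkl

lemma cabs_le {u : ℂ} {c : ℝ} (hc : 0 ≤ c) (h : u.re ^ 2 + u.im ^ 2 ≤ c ^ 2) :
    ‖u‖ ≤ c := by
  rw [Complex.norm_def, Complex.normSq_apply]
  have h' : u.re * u.re + u.im * u.im ≤ c ^ 2 := by nlinarith
  calc Real.sqrt (u.re * u.re + u.im * u.im) ≤ Real.sqrt (c ^ 2) := Real.sqrt_le_sqrt h'
  _ = c := by rw [Real.sqrt_sq hc]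

lemma small_lune_aux (r R d : ℝ) (hr : 0 < r) (hR : 0 < R) (hrd : r ≤ d)
    (h₁ : |R - r| < d) (h₂ : d < R + r)
    (harea : (volume {u : ℂ | ‖u‖ ≤ r ∧ ‖u - (d : ℂ)‖ ≤ R}).toReal
      ≤ Real.pi / 3 * r ^ 2) :
    R < d ∧ r / 20 < (d ^ 2 + r ^ 2 - R ^ 2) / (2 * d) := by
  have hd0 : 0 < d := lt_of_lt_of_le hr hrd
  set I := {u : ℂ | ‖u‖ ≤ r ∧ ‖u - (d : ℂ)‖ ≤ R} with hI
  set t := (d ^ 2 + r ^ 2 - R ^ 2) / (2 * d) with ht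
  have h2td : 2 * t * d = d ^ 2 + r ^ 2 - R ^ 2 := by
    rw [ht]; field_simp
  have hfin : volume I ≠ ⊤ := by
    have hsub : I ⊆ closedBall (0 : ℂ) r := by
      intro u hu
      rw [mem_closedBall, Complex.dist_eq, sub_zero]
      exact hu.1
    exact ((measure_mono hsub).trans_lt measure_closedBall_lt_top).ne
  have hπ : Real.pi < 3.15 := Real.pi_lt_d2
  have bound : ∀ c : ℝ, 0 ≤ c → ENNReal.ofReal c ≤ volume I → c ≤ Real.pi / 3 * r ^ 2 := by
    intro c hc0 hc
    have h1 := ENNReal.toReal_mono hfin hc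
    rw [ENNReal.toReal_ofReal hc0] at h1
    linarith
  -- Key 1 : t ≤ r/20 leads to contradiction
  have key1 : ¬ (t ≤ r / 20) := by
    intro htle
    set t₀ := max t 0 with ht₀
    have ht₀0 : 0 ≤ t₀ := le_max_right _ _
    have ht₀t : t ≤ t₀ := le_max_left _ _
    have ht₀le : t₀ ≤ r / 20 := max_le htle (by linarith)
    set h₀ := Real.sqrt (r ^ 2 - t₀ ^ 2) with hh₀def
    have hh₀sq : h₀ ^ 2 = r ^ 2 - t₀ ^ 2 := Real.sq_sqrt (by nlinarith)
    have hh₀ : 0 < h₀ := Real.sqrt_pos.2 (by nlinarith)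
    set l := (r - t₀) / h₀ ^ 2 with hl
    have hl0 : 0 ≤ l := div_nonneg (by linarith) (sq_nonneg _)
    have hsub : {u : ℂ | |u.im| < h₀ ∧ t₀ + 0 * u.im ^ 2 < u.re ∧ u.re < r - l * u.im ^ 2}
        ⊆ I := by
      rintro u ⟨hu1, hu2, hu3⟩
      have habs := abs_lt.1 hu1
      have him : u.im ^ 2 ≤ h₀ ^ 2 := by nlinarith [habs.1, habs.2]
      set q := u.im ^ 2 / h₀ ^ 2 with hq
      have hq0 : 0 ≤ q := div_nonneg (sq_nonneg _) (sq_nonneg _)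
      have hq1 : q ≤ 1 := by rw [hq, div_le_one (by positivity)]; exact him
      have himq : u.im ^ 2 = q * h₀ ^ 2 := by rw [hq]; field_simp
      have hu3' : u.re < r - (r - t₀) * q := by
        have e : l * u.im ^ 2 = (r - t₀) * q := by rw [himq, hl]; field_simp
        linarith [hu3, e.symm.le]
      have hre0 : 0 ≤ u.re := by nlinarith [hu2]
      have hret : t ≤ u.re := by nlinarith [hu2]
      clear hu1 hu2 hu3 habs harea hfin bound hπ htle hI
      clear_value t t₀ h₀ l q
      clear hq hl hh₀def ht₀
      have hub0 : 0 ≤ r - (r - t₀) * q := by nlinarith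
      have hA : u.re ^ 2 + u.im ^ 2 ≤ r ^ 2 := by
        have h2 : u.re ^ 2 ≤ (r - (r - t₀) * q) ^ 2 := by nlinarith
        nlinarith [mul_nonneg (mul_nonneg hq0 (sub_nonneg.2 hq1)) (sq_nonneg (r - t₀))]
      constructor
      · exact cabs_le hr.le hA
      · apply cabs_le hR.le
        simp only [Complex.sub_re, Complex.sub_im, Complex.ofReal_re, Complex.ofReal_im,
          sub_zero]
        nlinarith [mul_nonneg (sub_nonneg.2 hret) hd0.le]
    have hkl : r - t₀ = (0 + l) * h₀ ^ 2 := by rw [hl]; field_simp; ring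
    have hvol := strip_volume h₀ t₀ r 0 l hh₀ le_rfl hl0 hkl
    have hle : ENNReal.ofReal (4 / 3 * (r - t₀) * h₀) ≤ volume I := by
      rw [← hvol]; exact measure_mono hsub
    have hcle := bound _ (mul_nonneg (mul_nonneg (by norm_num) (by linarith)) hh₀.le) hle
    clear hsub hvol hle hkl bound harea hfin hI
    clear_value t t₀ h₀ l
    clear hl ht₀ hh₀def
    have h84 : 0.84 * r < h₀ := by nlinarith [hh₀.le, hh₀sq, ht₀le, ht₀0, hr]
    nlinarith [hcle, h84, ht₀le, ht₀0, hr, hπ, hh₀.le]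
  -- Key 2 : d ≤ R together with 0 ≤ t ≤ r/2 leads to contradiction
  have key2 : d ≤ R → 0 ≤ t → t ≤ r / 2 → False := by
    intro hdR ht0 htr2
    set σ := R - d + t with hσ
    have hσt : t ≤ σ := by linarith
    have hσtr : σ - t < r := by
      have := abs_lt.1 h₁
      linarith [this.1, this.2]
    have hs0 : 0 < d - t := by linarith
    set h' := Real.sqrt (r ^ 2 - t ^ 2) with hh'def
    have hh'sq : h' ^ 2 = r ^ 2 - t ^ 2 := Real.sq_sqrt (by nlinarith)
    have hh' : 0 < h' := Real.sqrt_pos.2 (by nlinarith)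
    have hsR : (d - t) ^ 2 + h' ^ 2 = R ^ 2 := by rw [hh'sq]; nlinarith [h2td]
    have hσR : σ ≤ R := by linarith
    set k := σ / h' ^ 2 with hk
    set l := (r - t) / h' ^ 2 with hl
    have hk0 : 0 ≤ k := div_nonneg (by linarith) (sq_nonneg _)
    have hl0 : 0 ≤ l := div_nonneg (by linarith) (sq_nonneg _)
    have hsub : {u : ℂ | |u.im| < h' ∧ (t - σ) + k * u.im ^ 2 < u.re ∧ u.re < r - l * u.im ^ 2}
        ⊆ I := by
      rintro u ⟨hu1, hu2, hu3⟩
      have habs := abs_lt.1 hu1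
      have him : u.im ^ 2 ≤ h' ^ 2 := by nlinarith [habs.1, habs.2]
      set q := u.im ^ 2 / h' ^ 2 with hq
      have hq0 : 0 ≤ q := div_nonneg (sq_nonneg _) (sq_nonneg _)
      have hq1 : q ≤ 1 := by rw [hq, div_le_one (by positivity)]; exact him
      have himq : u.im ^ 2 = q * h' ^ 2 := by rw [hq]; field_simp
      have hu2' : t - σ + σ * q < u.re := by
        have e : k * u.im ^ 2 = σ * q := by rw [himq, hk]; field_simp
        linarith [hu2, e.le]
      have hu3' : u.re < r - (r - t) * q := by
        have e : l * u.im ^ 2 = (r - t) * q := by rw [himq, hl]; field_simp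
        linarith [hu3, e.symm.le]
      have hσdR : t - σ = d - R := by rw [hσ]; ring
      clear hu1 hu2 hu3 habs harea hfin bound hπ key1 hI
      clear_value t σ h' k l q
      clear hq hk hl ht hσ hh'def
      have htσr : (t - σ) ^ 2 ≤ r ^ 2 := by nlinarith [hσt, hσtr]
      have Fhi : (r - (r - t) * q) ^ 2 + q * h' ^ 2 ≤ r ^ 2 := by
        nlinarith [mul_nonneg (mul_nonneg hq0 (sub_nonneg.2 hq1)) (sq_nonneg (r - t))]
      have Flo : (t - σ + σ * q) ^ 2 + q * h' ^ 2 ≤ r ^ 2 := by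
        nlinarith [mul_nonneg (mul_nonneg hq0 (sub_nonneg.2 hq1)) (sq_nonneg σ),
          mul_nonneg (sub_nonneg.2 hq1) (sub_nonneg.2 htσr)]
      have hA : u.re ^ 2 + u.im ^ 2 ≤ r ^ 2 := by
        rcases le_or_gt 0 u.re with hre | hre
        · have hub0 : 0 ≤ r - (r - t) * q := by nlinarith
          have h2 : u.re ^ 2 ≤ (r - (r - t) * q) ^ 2 := by nlinarith
          nlinarith [Fhi]
        · have h2 : u.re ^ 2 ≤ (t - σ + σ * q) ^ 2 := by nlinarith
          nlinarith [Flo]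
      constructor
      · exact cabs_le hr.le hA
      · apply cabs_le hR.le
        simp only [Complex.sub_re, Complex.sub_im, Complex.ofReal_re, Complex.ofReal_im,
          sub_zero]
        rcases le_or_gt t u.re with hre | hre
        · nlinarith [mul_nonneg (sub_nonneg.2 hre) hd0.le, hA]
        · have hlo : -(R - σ * q) < u.re - d := by linarith [hu2', hσdR]
          have hhi : u.re - d < 0 := by linarith
          have hRq : 0 ≤ R - σ * q := by nlinarith
          have h2 : (u.re - d) ^ 2 ≤ (R - σ * q) ^ 2 := by nlinarith
          have e1 : d - t = R - σ := by linarith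
          have hRσ : h' ^ 2 = 2 * R * σ - σ ^ 2 := by
            have h4 := hsR
            rw [e1] at h4
            nlinarith [h4]
          have e2 : q * h' ^ 2 = 2 * R * σ * q - σ ^ 2 * q := by rw [hRσ]; ring
          have h3 : (R - σ * q) ^ 2 + q * h' ^ 2 ≤ R ^ 2 := by
            nlinarith [e2, mul_nonneg (mul_nonneg hq0 (sub_nonneg.2 hq1)) (sq_nonneg σ)]
          nlinarith
    have hkl : r - (t - σ) = (k + l) * h' ^ 2 := by rw [hk, hl]; field_simp; ring
    have hvol := strip_volume h' (t - σ) r k l hh' hk0 hl0 hkl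
    have hle : ENNReal.ofReal (4 / 3 * (r - (t - σ)) * h') ≤ volume I := by
      rw [← hvol]; exact measure_mono hsub
    have hcle := bound _ (mul_nonneg (mul_nonneg (by norm_num) (by linarith)) hh'.le) hle
    clear hsub hvol hle hkl bound harea hfin hI
    clear_value t σ h' k l
    clear hk hl hσ hh'def
    have h86 : 0.86 * r < h' := by nlinarith [hh'.le, hh'sq, htr2, ht0, hr]
    nlinarith [hcle, h86, hσt, hh'.le, hr, hπ, ht0]
  push_neg at key1
  constructor
  · by_contra hdR
    push_neg at hdR
    have htr2 : t ≤ r / 2 := by nlinarith [h2td]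
    exact key2 hdR (by linarith) htr2
  · exact key1

/-- If a disc `B(v)` of radius `r` and a disc `𝔹(R)` of radius `R` have
centers at distance `d_c ≥ r`, their boundary circles intersect, and
`Area(B(v) ∩ 𝔹(R)) ≤ (π/3)·r²`, then `d_c > R`, and there are absolute constants `C₂ > 0` and
`γ_max < π/2` such that `R + r − d_c ≤ C₂·r` and the half-angle
`γ = arccos((d_c²+r²−R²)/(2 r d_c))` satisfies `γ ≤ γ_max`. -/
theorem small_lune_geometry :
    ∃ C₂ : ℝ, 0 < C₂ ∧ ∃ γmax : ℝ, γmax < Real.pi / 2 ∧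
      ∀ (z₁ z₂ : ℂ) (r R : ℝ), 0 < r → 0 < R → r ≤ dist z₁ z₂ →
        |R - r| < dist z₁ z₂ → dist z₁ z₂ < R + r →
        (volume (closedBall z₁ r ∩ closedBall z₂ R)).toReal ≤ Real.pi / 3 * r ^ 2 →
        R < dist z₁ z₂ ∧
        R + r - dist z₁ z₂ ≤ C₂ * r ∧
        Real.arccos (((dist z₁ z₂) ^ 2 + r ^ 2 - R ^ 2) / (2 * r * dist z₁ z₂)) ≤ γmax := by
  refine ⟨1, one_pos, Real.arccos (1 / 20), Real.arccos_lt_pi_div_two.mpr (by norm_num), ?_⟩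
  intro z₁ z₂ r R hr hR hrd h₁ h₂ harea
  set d := dist z₁ z₂ with hd
  have hd0 : 0 < d := lt_of_lt_of_le hr hrd
  have habs21 : ‖z₂ - z₁‖ = d := by
    rw [← Complex.dist_eq, dist_comm]
  have hdC : (d : ℂ) ≠ 0 := by
    exact_mod_cast ne_of_gt hd0
  have he : ‖(z₂ - z₁) / (d : ℂ)‖ = 1 := by
    rw [norm_div, habs21, Complex.norm_real, Real.norm_eq_abs, abs_of_pos hd0, div_self (ne_of_gt hd0)]
  set c : Circle := ⟨(z₂ - z₁) / (d : ℂ), by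
    show (z₂ - z₁) / (d : ℂ) ∈ Metric.sphere (0 : ℂ) 1
    rw [mem_sphere_zero_iff_norm]
    exact he⟩ with hc
  have hrot : MeasurePreserving (rotation c) (volume : Measure ℂ) volume :=
    (rotation c).measurePreserving
  have hmp : MeasurePreserving (fun u : ℂ => z₁ + rotation c u) volume volume :=
    (measurePreserving_add_left volume z₁).comp hrot
  have hpre : (fun u : ℂ => z₁ + rotation c u) ⁻¹' (closedBall z₁ r ∩ closedBall z₂ R)
      = {u : ℂ | ‖u‖ ≤ r ∧ ‖u - (d : ℂ)‖ ≤ R} := by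
    ext u
    simp only [mem_preimage, mem_inter_iff, mem_closedBall, mem_setOf_eq, rotation_apply]
    have hcabs : ‖(c : ℂ)‖ = 1 := Circle.norm_coe c
    have e1 : dist (z₁ + (c : ℂ) * u) z₁ = ‖u‖ := by
      rw [Complex.dist_eq, add_sub_cancel_left, norm_mul, hcabs, one_mul]
    have e2 : dist (z₁ + (c : ℂ) * u) z₂ = ‖u - (d : ℂ)‖ := by
      rw [Complex.dist_eq]
      have e3 : z₁ + (c : ℂ) * u - z₂ = (c : ℂ) * (u - (d : ℂ)) := by
        have hcd : (c : ℂ) * (d : ℂ) = z₂ - z₁ := by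
          rw [hc]
          field_simp
        rw [mul_sub, hcd]
        ring
      rw [e3, norm_mul, hcabs, one_mul]
    rw [e1, e2]
  have hvol : volume (closedBall z₁ r ∩ closedBall z₂ R)
      = volume {u : ℂ | ‖u‖ ≤ r ∧ ‖u - (d : ℂ)‖ ≤ R} := by
    rw [← hpre]
    exact (hmp.measure_preimage
      ((measurableSet_closedBall.inter measurableSet_closedBall).nullMeasurableSet)).symm
  rw [hvol] at harea
  obtain ⟨hRd, hgt⟩ := small_lune_aux r R d hr hR hrd h₁ h₂ harea
  refine ⟨hRd, by linarith, ?_⟩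
  have harg : (1 : ℝ) / 20 ≤ (d ^ 2 + r ^ 2 - R ^ 2) / (2 * r * d) := by
    have e : (d ^ 2 + r ^ 2 - R ^ 2) / (2 * r * d)
        = ((d ^ 2 + r ^ 2 - R ^ 2) / (2 * d)) / r := by
      rw [div_div]
      congr 1
      ring
    rw [e, le_div_iff₀ hr]
    linarith
  simp only [Real.arccos]
  have := Real.monotone_arcsin harg
  linarith
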